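/- Let N, r be positive integers and α ∈ K nonzero. If P ∈ K[t] lies in (t−α)^N·K[t] and satisfies Eval_α((θ)^{N+s−1}(P)) = 0 for all s = 1, …, r (where θ = t·d/dt and Eval_α is evaluation at α), then P ∈ (t−α)^{N+r}·K[t]. -/
import Mathlib


open Polynomial

/-- The Euler operator `θ = t·d/dt` on the polynomial ring `K[t]`. -/
noncomputable def theta (K : Type*) [CommRing K] : Module.End K (Polynomial K) :=
  (LinearMap.mulLeft K (X : Polynomial K)) ∘ₗ
    (Polynomial.derivative : Polynomial K →ₗ[K] Polynomial K)

lemma theta_apply {K : Type*} [CommRing K] (P : Polynomial K) :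
    theta K P = X * derivative P := rfl

lemma theta_pow_aux {K : Type*} [Field K] (α : K) (m : ℕ) (Q : Polynomial K) :
    ∀ k, k ≤ m → ∃ S : Polynomial K,
      (theta K ^ k) (((X : Polynomial K) - C α) ^ m * Q) = ((X : Polynomial K) - C α) ^ (m - k) * S ∧
      eval α S = (m.descFactorial k : K) * α ^ k * eval α Q := by
  intro k
  induction k with
  | zero => intro _; exact ⟨Q, by simp⟩
  | succ k ih =>
    intro hk
    obtain ⟨S, hS, hSe⟩ := ih (Nat.le_of_succ_le hk)
    have hj : 1 ≤ m - k := by omega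
    refine ⟨C ((m - k : ℕ) : K) * X * S + ((X : Polynomial K) - C α) * X * derivative S, ?_, ?_⟩
    · rw [pow_succ', Module.End.mul_apply, hS, theta_apply]
      rw [derivative_mul, derivative_pow]
      have hmk : m - (k + 1) = (m - k) - 1 := by omega
      rw [hmk]
      have : ((X : Polynomial K) - C α) ^ (m - k) =
          ((X : Polynomial K) - C α) ^ (m - k - 1) * ((X : Polynomial K) - C α) := by
        rw [← pow_succ]; congr 1; omega
      rw [this]
      simp only [derivative_sub, derivative_X, derivative_C, sub_zero, mul_one]
      ring
    · simp only [eval_add, eval_mul, eval_C, eval_X, eval_sub, sub_self, zero_mul, mul_zero,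
        add_zero, hSe, Nat.descFactorial_succ, Nat.cast_mul]
      push_cast
      ring

lemma step_lemma {K : Type*} [Field K] [CharZero K] (α : K) (hα : α ≠ 0) (m : ℕ) (hm : 1 ≤ m)
    (P : Polynomial K) (hdvd : ((X : Polynomial K) - C α) ^ m ∣ P)
    (heval : eval α ((theta K ^ m) P) = 0) :
    ((X : Polynomial K) - C α) ^ (m + 1) ∣ P := by
  obtain ⟨Q, rfl⟩ := hdvd
  obtain ⟨S, hS, hSe⟩ := theta_pow_aux α m Q m le_rfl
  rw [hS] at heval
  simp only [Nat.sub_self, pow_zero, one_mul] at heval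
  rw [hSe] at heval
  have hfac : (m.descFactorial m : K) ≠ 0 := by
    exact_mod_cast Nat.cast_ne_zero.mpr (Nat.descFactorial_self m ▸ Nat.factorial_ne_zero m)
  have hQ : eval α Q = 0 := by
    rcases mul_eq_zero.mp heval with h | h
    · rcases mul_eq_zero.mp h with h | h
      · exact absurd h hfac
      · exact absurd h (pow_ne_zero _ hα)
    · exact h
  have : (X : Polynomial K) - C α ∣ Q := dvd_iff_isRoot.mpr hQ
  obtain ⟨R, rfl⟩ := this
  exact ⟨R, by ring⟩

/-- If `P` vanishes to order at least `N` at `α ≠ 0` and `Eval_α(θ^{N+s−1}(P)) = 0`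
for `s = 1, …, r`, then `P` vanishes to order at least `N + r` at `α`. -/
theorem stmt9 (K : Type*) [Field K] [CharZero K] (N r : ℕ) (hN : 0 < N) (hr : 0 < r)
    (α : K) (hα : α ≠ 0) (P : Polynomial K)
    (hP : ((X : Polynomial K) - C α) ^ N ∣ P)
    (h : ∀ s, 1 ≤ s → s ≤ r → Polynomial.eval α ((theta K ^ (N + s - 1)) P) = 0) :
    ((X : Polynomial K) - C α) ^ (N + r) ∣ P := by
  clear hr
  induction r with
  | zero => simpa using hP
  | succ r ih =>
    have ihd := ih (fun s h1 h2 => h s h1 (by omega))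
    have heval : eval α ((theta K ^ (N + r)) P) = 0 := by
      have := h (r + 1) (by omega) le_rfl
      have hidx : N + (r + 1) - 1 = N + r := by omega
      rwa [hidx] at this
    have := step_lemma α hα (N + r) (by omega) P ihd heval
    rwa [show N + (r + 1) = N + r + 1 by ring]
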